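/- arXiv:2008.04668 — 2 statements merged into one kernel-verified Lean document; each statement's English description precedes it below -/
import Mathlib

section
/- Let K be a field, 𝒢 an ultragraph without sinks, and p, q irrational infinite paths in 𝒢. Let V_{[p]} be the K-vector space with basis [p] = {q ∈ 𝔭^∞ : q ∼ p}, made into a left L_K(𝒢)-module by the K-linear extension of: p_A·q = q if s(q) ∈ A and 0 otherwise; s_e·q = eq if s(q) ∈ r(e) and 0 otherwise; s*_e·q = τ_{>1}(q) if the first edge of q equals e, and 0 otherwise. Then: (1) V_{[p]} is a simple left L_K(𝒢)-module; (2) V_{[p]} ≅ V_{[q]} as left L_K(𝒢)-modules if and only if [p] = [q], which happens precisely when V_{[p]} = V_{[q]}; (3) End_{L_K(𝒢)}(V_{[p]}) ≅ K. -/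
set_option synthInstance.maxHeartbeats 1000000
set_option maxHeartbeats 1000000

noncomputable section
open Classical TensorProduct

/-- An ultragraph: countable sets of vertices and edges (countability is imposed in the
theorems), a source map and a range map taking nonempty sets of vertices. -/
structure Ultragraph (V E : Type) where
  s : E → V
  r : E → Set V
  r_nonempty : ∀ e, (r e).Nonempty

namespace Ultragraph

variable {V E : Type}

/-- Membership in `𝒢⁰`: the smallest collection of subsets of `G⁰` containing the
singletons and the ranges of edges, closed under finite unions and intersections. -/
inductive IsG0 (U : Ultragraph V E) : Set V → Prop
  | vertex (v : V) : IsG0 U {v}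
  | range (e : E) : IsG0 U (U.r e)
  | union {A B : Set V} : IsG0 U A → IsG0 U B → IsG0 U (A ∪ B)
  | inter {A B : Set V} : IsG0 U A → IsG0 U B → IsG0 U (A ∩ B)

variable (U : Ultragraph V E)

/-- No sinks: every vertex emits at least one edge. -/
def HasNoSinks : Prop := ∀ v : V, ∃ e : E, U.s e = v

/-- No vertex is an infinite emitter. -/
def NoInfiniteEmitters : Prop := ∀ v : V, {e : E | U.s e = v}.Finite

/-- A regular vertex: `0 < |s⁻¹(v)| < ∞`. -/
def IsRegular (v : V) : Prop := {e : E | U.s e = v}.Nonempty ∧ {e : E | U.s e = v}.Finite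

/-- Two edges are composable when the source of the second lies in the range of the first. -/
def Adj (e f : E) : Prop := U.s f ∈ U.r e

/-- A (possibly empty) compatible list of edges. -/
def IsEdgePath (l : List E) : Prop := List.Chain' U.Adj l

/-- Range of a list of edges: the range of its last edge (junk value `∅` on `[]`). -/
def rList (l : List E) : Set V :=
  match l.getLast? with
  | some e => U.r e
  | none => ∅

/-- A finite path in `𝒢*`: either an element of `𝒢⁰` (length `0`) or a nonempty
compatible list of edges. -/
def IsFPath : Set V ⊕ List E → Prop
  | Sum.inl A => U.IsG0 A
  | Sum.inr l => l ≠ [] ∧ U.IsEdgePath l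

/-- Range of a finite path. -/
def rF : Set V ⊕ List E → Set V
  | Sum.inl A => A
  | Sum.inr l => U.rList l

/-- "The source of the finite path `α` is the vertex `v`". -/
def sFMatch : Set V ⊕ List E → V → Prop
  | Sum.inl A, v => A = ({v} : Set V)
  | Sum.inr l, v => ∃ e, l.head? = some e ∧ U.s e = v

/-- A cycle: a nonempty path whose source vertex belongs to its range. -/
def IsCycle (c : List E) : Prop :=
  c ≠ [] ∧ U.IsEdgePath c ∧ ∃ e, c.head? = some e ∧ U.s e ∈ U.rList c

/-- A first-return path based at `v`. -/
def IsFirstReturn (v : V) (c : List E) : Prop :=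
  c ≠ [] ∧ U.IsEdgePath c ∧ (∃ e, c.head? = some e ∧ U.s e = v) ∧ v ∈ U.rList c ∧
    ∀ (i : ℕ) (h : i < c.length), 0 < i → U.s (c.get ⟨i, h⟩) ≠ v

/-- Condition (K). -/
def ConditionK : Prop :=
  ∀ v : V, (∀ c : List E, ¬ U.IsFirstReturn v c) ∨
    ∃ c₁ c₂ : List E, U.IsFirstReturn v c₁ ∧ U.IsFirstReturn v c₂ ∧ c₁ ≠ c₂

/-- `w ≥ v`: there is a finite path with source `w` whose range contains `v`. -/
def VGe (w v : V) : Prop := ∃ α : Set V ⊕ List E, U.IsFPath α ∧ U.sFMatch α w ∧ v ∈ U.rF α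

/-- An ultrapath, given as raw data `(α, A)` (a list of edges and a range set):
the list is compatible, `A ∈ 𝒢⁰` and `A ⊆ r(α)` when `α` is nonempty.
Length-zero ultrapaths `( [], A )` are the elements `A ∈ 𝒢⁰`. -/
def IsUPath (x : List E × Set V) : Prop :=
  U.IsEdgePath x.1 ∧ U.IsG0 x.2 ∧ ∀ e, x.1.getLast? = some e → x.2 ⊆ U.r e

/-- The "source" of an ultrapath, as a set: the singleton on the source of its first edge,
or the set itself in length zero. -/
def srcSet (x : List E × Set V) : Set V :=
  match x.1.head? with
  | some e => {U.s e}
  | none => x.2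

/-- The concatenation `x · y` is defined. -/
def CanConcatU (x y : List E × Set V) : Prop := (x.2 ∩ U.srcSet y).Nonempty

/-- An infinite path. -/
def IsIPath (p : ℕ → E) : Prop := ∀ n : ℕ, U.s (p (n + 1)) ∈ U.r (p n)

/-- The principal filter of `A` in the meet-semilattice `𝒢⁰`. -/
def principalFilter (A : Set V) : Set (Set V) := {B | U.IsG0 B ∧ A ⊆ B}

/-- A filter in `𝒢⁰`. -/
def IsFilterG0 (F : Set (Set V)) : Prop :=
  (∀ B ∈ F, U.IsG0 B) ∧ (∅ : Set V) ∉ F ∧ (∀ A ∈ F, ∀ B ∈ F, A ∩ B ∈ F) ∧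
    ∀ A ∈ F, ∀ B : Set V, U.IsG0 B → A ⊆ B → B ∈ F

/-- An ultraset: an element of `𝒢⁰` whose principal filter is an ultrafilter in `𝒢⁰`. -/
def IsUltraset (A : Set V) : Prop :=
  U.IsG0 A ∧ U.IsFilterG0 (U.principalFilter A) ∧
    ∀ F : Set (Set V), U.IsFilterG0 F → U.principalFilter A ⊆ F → F = U.principalFilter A

/-- `A` is an infinite emitter (as a set). -/
def InfEmitterSet (A : Set V) : Prop := {e : E | U.s e ∈ A}.Infinite

end Ultragraph

/-- Concatenation of ultrapaths (raw operation). -/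
def concatU {V E : Type} (x y : List E × Set V) : List E × Set V :=
  (x.1 ++ y.1, if y.1 = [] then x.2 ∩ y.2 else y.2)

/-- Prepend a finite list of edges to an infinite path. -/
def prependL {E : Type} (l : List E) (p : ℕ → E) : ℕ → E :=
  fun n => if h : n < l.length then l.get ⟨n, h⟩ else p (n - l.length)

/-- The periodic infinite path `ccc⋯` determined by a nonempty list `c`. -/
def periodicL {E : Type} (c : List E) (hc : c ≠ []) : ℕ → E :=
  fun n => c.get ⟨n % c.length, Nat.mod_lt n (List.length_pos_iff.mpr hc)⟩

/-- Shift of an infinite path: `τ_{>m}`. -/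
def shiftL {E : Type} (m : ℕ) (p : ℕ → E) : ℕ → E := fun n => p (n + m)

/-- Tail-equivalence of infinite paths. -/
def IPEquiv {E : Type} (p q : ℕ → E) : Prop := ∃ m n : ℕ, shiftL m p = shiftL n q

namespace Ultragraph

variable {V E : Type} (U : Ultragraph V E)

/-- Elements of `X_𝒢 = Y_∞ ∪ 𝔭^∞` (raw data): a finite ultrapath or an infinite path. -/
abbrev XType (V E : Type) : Type := (List E × Set V) ⊕ (ℕ → E)

/-- Concatenation of an ultrapath with an element of `X_𝒢` (raw operation). -/
def concatXel (x : List E × Set V) : XType V E → XType V E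
  | Sum.inl y => Sum.inl (concatU x y)
  | Sum.inr p => Sum.inr (prependL x.1 p)

/-- Membership in `X_𝒢`. -/
def IsXEl : XType V E → Prop
  | Sum.inl y => U.IsUPath y ∧ U.IsUltraset y.2 ∧ U.InfEmitterSet y.2
  | Sum.inr p => U.IsIPath p

/-- The concatenation `x · μ` is defined. -/
def CanConcatX (x : List E × Set V) : XType V E → Prop
  | Sum.inl y => U.CanConcatU x y
  | Sum.inr p => U.s (p 0) ∈ x.2

/-- Raw triples, of which the ultragraph groupoid consists. -/
abbrev Trip (V E : Type) : Type := XType V E × ℤ × XType V E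

/-- Membership in the ultragraph groupoid
`𝔊_𝒢 = {(x·μ, |x|−|y|, y·μ) : x, y ∈ 𝔭, μ ∈ X_𝒢, r(x) = r(y), x·μ, y·μ ∈ X_𝒢}`. -/
def InGrpd (g : Trip V E) : Prop :=
  ∃ (x y : List E × Set V) (μ : XType V E),
    U.IsUPath x ∧ U.IsUPath y ∧ U.IsXEl μ ∧ x.2 = y.2 ∧
    U.CanConcatX x μ ∧ U.CanConcatX y μ ∧
    U.IsXEl (concatXel x μ) ∧ U.IsXEl (concatXel y μ) ∧
    g = (concatXel x μ, (x.1.length : ℤ) - (y.1.length : ℤ), concatXel y μ)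

end Ultragraph

/-- Composition in the ultragraph groupoid: `(u,k,v)(v,l,w) = (u,k+l,w)` (raw operation). -/
def compT {V E : Type} (a b : Ultragraph.Trip V E) : Ultragraph.Trip V E :=
  (a.1, a.2.1 + b.2.1, b.2.2)

namespace Ultragraph

variable {V E : Type} (U : Ultragraph V E)

/-- The degree-`n` component `(𝔊_𝒢)_n` of the ℤ-graded ultragraph groupoid. -/
def gradeSet (n : ℤ) : Set (Trip V E) := {g | U.InGrpd g ∧ g.2.1 = n}

/-- Product of two subsets of the groupoid: `ST = {ab : a ∈ S, b ∈ T composable}`. -/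
def setMulG (S T : Set (Trip V E)) : Set (Trip V E) :=
  {c | ∃ a ∈ S, ∃ b ∈ T, a.2.2 = b.1 ∧ c = compT a b}

/-- The carrier of the ultragraph groupoid `𝔊_𝒢`. -/
def Grpd : Type := {g : Trip V E // U.InGrpd g}

/-- The set `𝒜(x,y)`. -/
def ASetRaw (x y : List E × Set V) : Set (Trip V E) :=
  {g | ∃ μ : XType V E, U.IsXEl μ ∧ U.CanConcatX x μ ∧ U.CanConcatX y μ ∧
      U.IsXEl (concatXel x μ) ∧ U.IsXEl (concatXel y μ) ∧
      g = (concatXel x μ, (x.1.length : ℤ) - (y.1.length : ℤ), concatXel y μ)}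

/-- The set `𝒜(x,y)` inside the groupoid. -/
def ASet (x y : List E × Set V) : Set U.Grpd := {g | g.1 ∈ U.ASetRaw x y}

/-- The basic set `𝒜(x,y,K,Q)`. -/
def ABasic (x y : List E × Set V) (Ke : Set E) (Q : Set (Set V)) : Set U.Grpd :=
  U.ASet x y \
    ((⋃ e ∈ Ke, U.ASet (concatU x ([e], U.r e)) (concatU y ([e], U.r e))) ∪
      ⋃ C ∈ Q, U.ASet (concatU x (([] : List E), C)) (concatU y (([] : List E), C)))

/-- The collection of all basic open sets `𝒜(x,y,K,Q)`. -/
def BasicSets : Set (Set U.Grpd) :=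
  {S | ∃ (x y : List E × Set V) (Ke : Set E) (Q : Set (Set V)),
      U.IsUPath x ∧ U.IsUPath y ∧ x.2 = y.2 ∧
      (∀ e ∈ Ke, U.s e ∈ x.2) ∧ Ke.Finite ∧ (∀ C ∈ Q, U.IsG0 C) ∧ Q.Finite ∧
      S = U.ABasic x y Ke Q}

/-- The topology of the ultragraph groupoid, generated by the sets `𝒜(x,y,K,Q)`. -/
instance : TopologicalSpace U.Grpd := TopologicalSpace.generateFrom U.BasicSets

/-- The unit space `𝔊_𝒢⁽⁰⁾ = {(μ,0,μ) : μ ∈ X_𝒢}` inside the groupoid. -/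
def unitSpaceSet : Set U.Grpd := {g | g.1.2.1 = 0 ∧ g.1.1 = g.1.2.2}

end Ultragraph

/-- The source unit `s(u,k,v) = (v,0,v)` of a raw triple. -/
def srcT {V E : Type} (g : Ultragraph.Trip V E) : Ultragraph.Trip V E := (g.2.2, 0, g.2.2)

/-- The range unit `r(u,k,v) = (u,0,u)` of a raw triple. -/
def rngT {V E : Type} (g : Ultragraph.Trip V E) : Ultragraph.Trip V E := (g.1, 0, g.1)

namespace Ultragraph

variable {V E : Type} (U : Ultragraph V E)

/-- A subset `D` of the unit space is invariant if `s(γ) ∈ D` implies `r(γ) ∈ D`. -/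
def InvariantSet (D : Set U.Grpd) : Prop :=
  ∀ g : U.Grpd, ∀ (h1 : U.InGrpd (srcT g.1)) (h2 : U.InGrpd (rngT g.1)),
    (⟨srcT g.1, h1⟩ : U.Grpd) ∈ D → (⟨rngT g.1, h2⟩ : U.Grpd) ∈ D

/-- The source of `g` lies in `D`. -/
def SrcInD (D : Set U.Grpd) (g : U.Grpd) : Prop :=
  ∃ h : U.InGrpd (srcT g.1), (⟨srcT g.1, h⟩ : U.Grpd) ∈ D

/-- The range of `g` lies in `D`. -/
def RngInD (D : Set U.Grpd) (g : U.Grpd) : Prop :=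
  ∃ h : U.InGrpd (rngT g.1), (⟨rngT g.1, h⟩ : U.Grpd) ∈ D

/-- The restriction `𝔊_𝒢|_D` of the groupoid to a subset `D` of the unit space. -/
def RestrSet (D : Set U.Grpd) : Set U.Grpd := {g | U.SrcInD D g ∧ U.RngInD D g}

/-- The ultragraph groupoid is minimal: the unit space has no nontrivial open
invariant subsets. -/
def IsMinimalGrpd : Prop :=
  ∀ D : Set U.Grpd, D ⊆ U.unitSpaceSet →
    IsOpen {u : U.unitSpaceSet | (u : U.Grpd) ∈ D} → U.InvariantSet D →
      D = ∅ ∨ D = U.unitSpaceSet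

end Ultragraph


namespace Ultragraph

variable {V E : Type}

/-- Generators of the ultragraph Leavitt path algebra: `p_A` (`A ∈ 𝒢⁰`), `s_e`, `s*_e`. -/
inductive LGen (U : Ultragraph V E) : Type
  | pr : {A : Set V // U.IsG0 A} → LGen U
  | ed : E → LGen U
  | st : E → LGen U

variable (K : Type) [Field K] (U : Ultragraph V E)

/-- The defining relations of the ultragraph Leavitt path algebra. -/
inductive LRel : FreeAlgebra K (LGen U) → FreeAlgebra K (LGen U) → Prop
  | pEmpty (h : U.IsG0 (∅ : Set V)) :
      LRel (FreeAlgebra.ι K (LGen.pr ⟨∅, h⟩)) 0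
  | pInter (A B : {A : Set V // U.IsG0 A}) :
      LRel (FreeAlgebra.ι K (LGen.pr A) * FreeAlgebra.ι K (LGen.pr B))
        (FreeAlgebra.ι K (LGen.pr ⟨A.1 ∩ B.1, IsG0.inter A.2 B.2⟩))
  | pUnion (A B : {A : Set V // U.IsG0 A}) :
      LRel (FreeAlgebra.ι K (LGen.pr ⟨A.1 ∪ B.1, IsG0.union A.2 B.2⟩))
        (FreeAlgebra.ι K (LGen.pr A) + FreeAlgebra.ι K (LGen.pr B) -
          FreeAlgebra.ι K (LGen.pr ⟨A.1 ∩ B.1, IsG0.inter A.2 B.2⟩))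
  | sLeft (e : E) :
      LRel (FreeAlgebra.ι K (LGen.pr ⟨{U.s e}, IsG0.vertex (U.s e)⟩) * FreeAlgebra.ι K (LGen.ed e))
        (FreeAlgebra.ι K (LGen.ed e))
  | sRight (e : E) :
      LRel (FreeAlgebra.ι K (LGen.ed e) * FreeAlgebra.ι K (LGen.pr ⟨U.r e, IsG0.range e⟩))
        (FreeAlgebra.ι K (LGen.ed e))
  | stLeft (e : E) :
      LRel (FreeAlgebra.ι K (LGen.pr ⟨U.r e, IsG0.range e⟩) * FreeAlgebra.ι K (LGen.st e))
        (FreeAlgebra.ι K (LGen.st e))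
  | stRight (e : E) :
      LRel (FreeAlgebra.ι K (LGen.st e) * FreeAlgebra.ι K (LGen.pr ⟨{U.s e}, IsG0.vertex (U.s e)⟩))
        (FreeAlgebra.ι K (LGen.st e))
  | ortho (e f : E) (h : e ≠ f) :
      LRel (FreeAlgebra.ι K (LGen.st e) * FreeAlgebra.ι K (LGen.ed f)) 0
  | ck1 (e : E) :
      LRel (FreeAlgebra.ι K (LGen.st e) * FreeAlgebra.ι K (LGen.ed e))
        (FreeAlgebra.ι K (LGen.pr ⟨U.r e, IsG0.range e⟩))
  | ck2 (v : V) (h : U.IsRegular v) :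
      LRel (FreeAlgebra.ι K (LGen.pr ⟨{v}, IsG0.vertex v⟩))
        (h.2.toFinset.sum fun e => FreeAlgebra.ι K (LGen.ed e) * FreeAlgebra.ι K (LGen.st e))

/-- The ultragraph Leavitt path algebra `L_K(𝒢)`, presented by generators and relations.
(For a non-unital `L_K(𝒢)` this is its unitalization; the algebra itself is the
subspace `Lsub` spanned by the monomials `s_α p_A s*_β`.) -/
abbrev LPA : Type := RingQuot (LRel K U)

/-- The generator `p_A`. -/
def pGen (A : Set V) (h : U.IsG0 A) : LPA K U :=
  RingQuot.mkAlgHom K (LRel K U) (FreeAlgebra.ι K (LGen.pr ⟨A, h⟩))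

/-- The generator `s_e`. -/
def sGen (e : E) : LPA K U :=
  RingQuot.mkAlgHom K (LRel K U) (FreeAlgebra.ι K (LGen.ed e))

/-- The generator `s*_e`. -/
def stGen (e : E) : LPA K U :=
  RingQuot.mkAlgHom K (LRel K U) (FreeAlgebra.ι K (LGen.st e))

/-- `s_α` for a list of edges `α`. -/
def sPath (l : List E) : LPA K U := (l.map (sGen K U)).prod

/-- `s*_α` for a list of edges `α`. -/
def stPath (l : List E) : LPA K U := (l.reverse.map (stGen K U)).prod

/-- The degree-`n` homogeneous component
`L_K(𝒢)_n = span_K { s_α p_A s*_β : |α| − |β| = n }`. -/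
def homComp (n : ℤ) : Submodule K (LPA K U) :=
  Submodule.span K {x : LPA K U | ∃ (α β : List E) (A : Set V) (hA : U.IsG0 A),
    (α.length : ℤ) - (β.length : ℤ) = n ∧
    x = sPath K U α * pGen K U A hA * stPath K U β}

/-- The Leavitt path algebra `L_K(𝒢)` itself: the span of all monomials `s_α p_A s*_β`
inside the (possibly unitalized) presented algebra. -/
def Lsub : Submodule K (LPA K U) :=
  Submodule.span K {x : LPA K U | ∃ (α β : List E) (A : Set V) (hA : U.IsG0 A),
    x = sPath K U α * pGen K U A hA * stPath K U β}

/-- `s_α` for a finite path `α ∈ 𝒢*` (with `s_A = p_A` in length zero). -/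
def sFMono : (α : Set V ⊕ List E) → U.IsFPath α → LPA K U
  | Sum.inl A, h => pGen K U A h
  | Sum.inr l, _ => sPath K U l

/-- `s*_α` for a finite path `α ∈ 𝒢*` (with `s*_A = p_A` in length zero). -/
def stFMono : (α : Set V ⊕ List E) → U.IsFPath α → LPA K U
  | Sum.inl A, h => pGen K U A h
  | Sum.inr l, _ => stPath K U l

/-- A (two-sided) ideal of `L_K(𝒢)` (sitting inside the presented algebra). -/
def IsTwoSidedIdealOfL (I : Set (LPA K U)) : Prop :=
  I ⊆ (Lsub K U : Set (LPA K U)) ∧ (0 : LPA K U) ∈ I ∧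
    (∀ a ∈ I, ∀ b ∈ I, a + b ∈ I) ∧ (∀ a ∈ I, -a ∈ I) ∧
    (∀ k : K, ∀ a ∈ I, k • a ∈ I) ∧
    ∀ a ∈ I, ∀ x ∈ (Lsub K U : Set (LPA K U)), a * x ∈ I ∧ x * a ∈ I

/-- A right ideal of `L_K(𝒢)`. -/
def IsRightIdealOfL (I : Set (LPA K U)) : Prop :=
  I ⊆ (Lsub K U : Set (LPA K U)) ∧ (0 : LPA K U) ∈ I ∧
    (∀ a ∈ I, ∀ b ∈ I, a + b ∈ I) ∧ (∀ a ∈ I, -a ∈ I) ∧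
    (∀ k : K, ∀ a ∈ I, k • a ∈ I) ∧
    ∀ a ∈ I, ∀ x ∈ (Lsub K U : Set (LPA K U)), a * x ∈ I

/-- A left ideal of `L_K(𝒢)`. -/
def IsLeftIdealOfL (I : Set (LPA K U)) : Prop :=
  I ⊆ (Lsub K U : Set (LPA K U)) ∧ (0 : LPA K U) ∈ I ∧
    (∀ a ∈ I, ∀ b ∈ I, a + b ∈ I) ∧ (∀ a ∈ I, -a ∈ I) ∧
    (∀ k : K, ∀ a ∈ I, k • a ∈ I) ∧
    ∀ a ∈ I, ∀ x ∈ (Lsub K U : Set (LPA K U)), x * a ∈ I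

/-- A subset of `L_K(𝒢)` is graded if each of its elements is a sum of homogeneous
elements lying in it. -/
def IsGradedSet (I : Set (LPA K U)) : Prop :=
  I ⊆ (AddSubgroup.closure {a : LPA K U | a ∈ I ∧ ∃ n : ℤ, a ∈ homComp K U n} :
    Set (LPA K U))

/-- The right ideal of `L_K(𝒢)` generated by a set. -/
def rIdealGen (S : Set (LPA K U)) : Set (LPA K U) :=
  ⋂₀ {I : Set (LPA K U) | IsRightIdealOfL K U I ∧ S ⊆ I}

/-- The left ideal of `L_K(𝒢)` generated by a set. -/
def lIdealGen (S : Set (LPA K U)) : Set (LPA K U) :=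
  ⋂₀ {I : Set (LPA K U) | IsLeftIdealOfL K U I ∧ S ⊆ I}

/-- Powers of an ideal: `J, J², J³, …` (as sets, `idealPow J n = J^{n+1}`). -/
def idealPow (J : Set (LPA K U)) : ℕ → Set (LPA K U)
  | 0 => J
  | n + 1 => (AddSubgroup.closure
      {z : LPA K U | ∃ a ∈ J, ∃ b ∈ idealPow J n, z = a * b} : Set (LPA K U))

end Ultragraph

namespace Ultragraph

variable {V E : Type} (U : Ultragraph V E)

/-- Condition (2) of the strong-grading criterion: for every `k ∈ ℕ` and every infinite
path `p`, there are an initial subpath `x` of `p` and a finite path `y ∈ 𝒢*` with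
`r(x) = r(y)` and `|y| − |x| = k`. -/
def GradedCond2 : Prop :=
  ∀ (k : ℕ) (p : ℕ → E), U.IsIPath p →
    ∃ n : ℕ, 0 < n ∧ ∃ y : List E, y ≠ [] ∧ U.IsEdgePath y ∧
      U.rList y = U.r (p (n - 1)) ∧ (y.length : ℤ) - (n : ℤ) = (k : ℤ)

variable (K : Type) [Field K]

/-- The projection onto the degree-`n` homogeneous component (obtained by choice from the
internal decomposition of the grading; `0` if no such family of projections exists). -/
noncomputable def gradedProj (n : ℤ) : LPA K U →ₗ[K] LPA K U :=
  if h : ∃ P : ℤ → (LPA K U →ₗ[K] LPA K U),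
      (∀ (m : ℤ) (x : LPA K U), P m x ∈ homComp K U m) ∧
      (∀ m : ℤ, ∀ x ∈ homComp K U m, P m x = x) ∧
      (∀ m k' : ℤ, m ≠ k' → ∀ x ∈ homComp K U k', P m x = 0)
  then h.choose n else 0

/-- Multiplication of the smash product `L_K(𝒢) # ℤ`:
`(a p_m)(b p_n) = a·b_{m−n} p_n`, where elements of `L_K(𝒢) # ℤ` are finitely
supported functions `ℤ →₀ L_K(𝒢)`. -/
noncomputable def smashMul (x y : ℤ →₀ LPA K U) : ℤ →₀ LPA K U :=
  x.sum fun m a => y.sum fun n b => Finsupp.single n (a * gradedProj U K (m - n) b)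

end Ultragraph

/-- The skew product ultragraph `𝒢 ×₁ ℤ`. -/
def Ultragraph.skewZ {V E : Type} (U : Ultragraph V E) : Ultragraph (V × ℤ) (E × ℤ) where
  s := fun en => (U.s en.1, en.2)
  r := fun en => (fun w => (w, en.2 - 1)) '' U.r en.1
  r_nonempty := fun en => (U.r_nonempty en.1).image _

namespace Ultragraph

variable {V E : Type} (U : Ultragraph V E) (K : Type) [Field K]

/-- Composability of two groupoid elements. -/
def Composable (a b : U.Grpd) : Prop := a.1.2.2 = b.1.1

/-- Convolution product of functions on the groupoid:
`(f * g)(γ) = Σ_{γ = αβ} f(α) g(β)`. -/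
noncomputable def convK (f g : U.Grpd → K) : U.Grpd → K :=
  fun γ => ∑ᶠ q : {q : U.Grpd × U.Grpd // U.Composable q.1 q.2 ∧ compT q.1.1 q.2.1 = γ.1},
    f q.1.1 * g q.1.2

/-- A compact open bisection of the ultragraph groupoid. -/
def IsCOB (W : Set U.Grpd) : Prop :=
  IsCompact W ∧ IsOpen W ∧
    (∀ a ∈ W, ∀ b ∈ W, a.1.2.2 = b.1.2.2 → a = b) ∧
    ∀ a ∈ W, ∀ b ∈ W, a.1.1 = b.1.1 → a = b

/-- The Steinberg algebra `A_K(𝔊_𝒢)` (as a subspace of `K^{𝔊_𝒢}`): the `K`-span of the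
characteristic functions of compact open bisections. -/
def SteinbergSpan : Submodule K (U.Grpd → K) :=
  Submodule.span K {f : U.Grpd → K |
    ∃ W : Set U.Grpd, U.IsCOB W ∧ f = Set.indicator W fun _ => (1 : K)}

/-- The span of characteristic functions of `n`-homogeneous compact open bisections:
the degree-`n` component `A_K(𝔊_𝒢)_n`. -/
def SteinbergComp (n : ℤ) : Submodule K (U.Grpd → K) :=
  Submodule.span K {f : U.Grpd → K |
    ∃ W : Set U.Grpd, U.IsCOB W ∧ W ⊆ {g : U.Grpd | g.1.2.1 = n} ∧
      f = Set.indicator W fun _ => (1 : K)}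

end Ultragraph

namespace Ultragraph

variable {V E : Type} (K : Type) [Field K] (U : Ultragraph V E)

/-- The `K`-vector space `V_A` (`A = r(x)`), with basis `{z ∈ 𝔭 : r(z) = A}`. -/
abbrev ModVx (A : Set V) : Type :=
  {z : List E × Set V // U.IsUPath z ∧ z.2 = A} →₀ K

/-- The prescribed `L_K(𝒢)`-action on the basis of `V_A`, together with compatibility of
the `K`- and `L_K(𝒢)`-scalar multiplications. -/
def VxHyps (A : Set V) [instM : Module (LPA K U) (ModVx K U A)] : Prop :=
  (∀ (k : K) (a : LPA K U) (m : ModVx K U A), (k • a) • m = k • (a • m)) ∧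
  (∀ (B : Set V) (hB : U.IsG0 B) (z : {z : List E × Set V // U.IsUPath z ∧ z.2 = A}),
      ((B ∩ U.srcSet z.1).Nonempty →
        pGen K U B hB • Finsupp.single z (1 : K) = Finsupp.single z (1 : K)) ∧
      (¬ (B ∩ U.srcSet z.1).Nonempty →
        pGen K U B hB • Finsupp.single z (1 : K) = 0)) ∧
  (∀ (e : E) (z : {z : List E × Set V // U.IsUPath z ∧ z.2 = A}),
      ((U.r e ∩ U.srcSet z.1).Nonempty →
        ∀ z' : {z : List E × Set V // U.IsUPath z ∧ z.2 = A}, z'.1 = (e :: z.1.1, z.1.2) →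
          sGen K U e • Finsupp.single z (1 : K) = Finsupp.single z' (1 : K)) ∧
      (¬ (U.r e ∩ U.srcSet z.1).Nonempty →
        sGen K U e • Finsupp.single z (1 : K) = 0)) ∧
  (∀ (e : E) (z : {z : List E × Set V // U.IsUPath z ∧ z.2 = A}),
      (∀ l : List E, z.1.1 = e :: l →
        ∀ z' : {z : List E × Set V // U.IsUPath z ∧ z.2 = A}, z'.1 = (l, z.1.2) →
          stGen K U e • Finsupp.single z (1 : K) = Finsupp.single z' (1 : K)) ∧
      ((∀ l : List E, z.1.1 ≠ e :: l) →
        stGen K U e • Finsupp.single z (1 : K) = 0))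

/-- The `K`-vector space `V_{[p]}`, with basis the tail-equivalence class `[p]`. -/
abbrev ModVp (p : ℕ → E) : Type :=
  {q : ℕ → E // U.IsIPath q ∧ IPEquiv p q} →₀ K

/-- The prescribed `L_K(𝒢)`-action on the basis of `V_{[p]}`, together with compatibility
of the `K`- and `L_K(𝒢)`-scalar multiplications. -/
def VpHyps (p : ℕ → E) [instM : Module (LPA K U) (ModVp K U p)] : Prop :=
  (∀ (k : K) (a : LPA K U) (m : ModVp K U p), (k • a) • m = k • (a • m)) ∧
  (∀ (B : Set V) (hB : U.IsG0 B) (q : {q : ℕ → E // U.IsIPath q ∧ IPEquiv p q}),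
      (U.s (q.1 0) ∈ B →
        pGen K U B hB • Finsupp.single q (1 : K) = Finsupp.single q (1 : K)) ∧
      (U.s (q.1 0) ∉ B →
        pGen K U B hB • Finsupp.single q (1 : K) = 0)) ∧
  (∀ (e : E) (q : {q : ℕ → E // U.IsIPath q ∧ IPEquiv p q}),
      (U.s (q.1 0) ∈ U.r e →
        ∀ q' : {q : ℕ → E // U.IsIPath q ∧ IPEquiv p q}, q'.1 = prependL [e] q.1 →
          sGen K U e • Finsupp.single q (1 : K) = Finsupp.single q' (1 : K)) ∧
      (U.s (q.1 0) ∉ U.r e →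
        sGen K U e • Finsupp.single q (1 : K) = 0)) ∧
  (∀ (e : E) (q : {q : ℕ → E // U.IsIPath q ∧ IPEquiv p q}),
      (q.1 0 = e →
        ∀ q' : {q : ℕ → E // U.IsIPath q ∧ IPEquiv p q}, q'.1 = shiftL 1 q.1 →
          stGen K U e • Finsupp.single q (1 : K) = Finsupp.single q' (1 : K)) ∧
      (q.1 0 ≠ e →
        stGen K U e • Finsupp.single q (1 : K) = 0))

/-- A rational infinite path: tail-equivalent to `c^∞` for some cycle `c`. -/
def IsRationalP (p : ℕ → E) : Prop :=
  ∃ (c : List E) (hc : c ≠ []), U.IsCycle c ∧ IPEquiv p (periodicL c hc)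

/-- The Laurent polynomial ring `K[t,t⁻¹]`. -/
abbrev LaurK : Type := LaurentPolynomial K

/-- The quotient `K[t,t⁻¹]/(f)`. -/
abbrev QuotF (f : LaurK K) : Type := LaurK K ⧸ Ideal.span ({f} : Set (LaurK K))

/-- The prescribed right `K[t,t⁻¹]`-structure on `V_{[p]}` induced by the isotropy
action: for `p ∼ c^∞` with `c` a cycle, `t` acts by shifting by `|c|` (prepending `c`);
together with compatibility with the `K`-structure. -/
def VpLaurHyps (p : ℕ → E) [instF : Module (LaurK K) (ModVp K U p)] : Prop :=
  (∀ (k : K) (m : ModVp K U p), (algebraMap K (LaurK K) k) • m = k • m) ∧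
  (∀ (c : List E) (hc : c ≠ []), U.IsCycle c → IPEquiv p (periodicL c hc) →
    ∀ (q q' : {q : ℕ → E // U.IsIPath q ∧ IPEquiv p q}), q.1 = prependL c q'.1 →
      (LaurentPolynomial.T 1 : LaurK K) • Finsupp.single q' (1 : K) =
        Finsupp.single q (1 : K))

/-- The module `V^f_{[p]} = V_{[p]} ⊗_{K[t,t⁻¹]} K[t,t⁻¹]/(f)`. -/
abbrev ModVf (p : ℕ → E) (f : LaurK K) [instF : Module (LaurK K) (ModVp K U p)] : Type :=
  TensorProduct (LaurK K) (ModVp K U p) (QuotF K f)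

/-- The prescribed `L_K(𝒢)`-action on `V^f_{[p]}`: the action on simple tensors is the
`V_{[p]}`-action on the first factor, and it commutes with the `K[t,t⁻¹]`-action. -/
def VfHyps (p : ℕ → E) (f : LaurK K) [instF : Module (LaurK K) (ModVp K U p)]
    [instL : Module (LPA K U) (ModVf K U p f)] : Prop :=
  (∀ (u : LaurK K) (a : LPA K U) (m : ModVf K U p f), a • u • m = u • a • m) ∧
  (∀ (B : Set V) (hB : U.IsG0 B) (q : {q : ℕ → E // U.IsIPath q ∧ IPEquiv p q})
      (w : QuotF K f),
      (U.s (q.1 0) ∈ B →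
        pGen K U B hB • (Finsupp.single q (1 : K) ⊗ₜ[LaurK K] w) =
          Finsupp.single q (1 : K) ⊗ₜ[LaurK K] w) ∧
      (U.s (q.1 0) ∉ B →
        pGen K U B hB • (Finsupp.single q (1 : K) ⊗ₜ[LaurK K] w) = 0)) ∧
  (∀ (e : E) (q : {q : ℕ → E // U.IsIPath q ∧ IPEquiv p q}) (w : QuotF K f),
      (U.s (q.1 0) ∈ U.r e →
        ∀ q' : {q : ℕ → E // U.IsIPath q ∧ IPEquiv p q}, q'.1 = prependL [e] q.1 →
          sGen K U e • (Finsupp.single q (1 : K) ⊗ₜ[LaurK K] w) =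
            Finsupp.single q' (1 : K) ⊗ₜ[LaurK K] w) ∧
      (U.s (q.1 0) ∉ U.r e →
        sGen K U e • (Finsupp.single q (1 : K) ⊗ₜ[LaurK K] w) = 0)) ∧
  (∀ (e : E) (q : {q : ℕ → E // U.IsIPath q ∧ IPEquiv p q}) (w : QuotF K f),
      (q.1 0 = e →
        ∀ q' : {q : ℕ → E // U.IsIPath q ∧ IPEquiv p q}, q'.1 = shiftL 1 q.1 →
          stGen K U e • (Finsupp.single q (1 : K) ⊗ₜ[LaurK K] w) =
            Finsupp.single q' (1 : K) ⊗ₜ[LaurK K] w) ∧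
      (q.1 0 ≠ e →
        stGen K U e • (Finsupp.single q (1 : K) ⊗ₜ[LaurK K] w) = 0))

end Ultragraph

namespace Ultragraph

variable {V E : Type} (U : Ultragraph V E)

/-- `μ` is eventually periodic: `μ = p·σσσ⋯` for a finite list `p` and a cycle `σ`. -/
def IsEvPeriodic (μ : XType V E) : Prop :=
  ∃ (l c : List E) (hc : c ≠ []), U.IsCycle c ∧ μ = Sum.inr (prependL l (periodicL c hc))

end Ultragraph


/- ------------------- Auxiliary machinery for the proof ------------------- -/

section PathAux

variable {V E : Type}

lemma shiftL_zero' (f : ℕ → E) : shiftL 0 f = f := funext fun n => congrArg f (Nat.add_zero n)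

lemma shiftL_shiftL' (a b : ℕ) (f : ℕ → E) : shiftL a (shiftL b f) = shiftL (a + b) f :=
  funext fun n => congrArg f (by omega)

lemma ipe_refl (p : ℕ → E) : IPEquiv p p := ⟨0, 0, rfl⟩

lemma ipe_symm {p q : ℕ → E} : IPEquiv p q → IPEquiv q p := fun ⟨m, n, h⟩ => ⟨n, m, h.symm⟩

lemma ipe_trans {p q r : ℕ → E} : IPEquiv p q → IPEquiv q r → IPEquiv p r := by
  rintro ⟨m, n, h1⟩ ⟨a, b, h2⟩
  refine ⟨a + m, n + b, ?_⟩
  have hA : shiftL a (shiftL m p) = shiftL a (shiftL n q) := by rw [h1]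
  rw [shiftL_shiftL', shiftL_shiftL'] at hA
  have hB : shiftL n (shiftL a q) = shiftL n (shiftL b r) := by rw [h2]
  rw [shiftL_shiftL', shiftL_shiftL'] at hB
  rw [hA, show a + n = n + a by omega, hB]

lemma prependL_one_zero (e : E) (f : ℕ → E) : prependL [e] f 0 = e := by
  simp [prependL]

lemma prependL_one_succ (e : E) (f : ℕ → E) (n : ℕ) : prependL [e] f (n + 1) = f n := by
  simp [prependL]

variable (U : Ultragraph V E)

lemma isIPath_shiftL {f : ℕ → E} (h : U.IsIPath f) (N : ℕ) : U.IsIPath (shiftL N f) := by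
  intro n
  have h2 := h (n + N)
  show U.s (f (n + 1 + N)) ∈ U.r (f (n + N))
  rw [show n + 1 + N = n + N + 1 by omega]
  exact h2

lemma isIPath_prepend {f : ℕ → E} (e : E) (h : U.IsIPath f) (he : U.s (f 0) ∈ U.r e) :
    U.IsIPath (prependL [e] f) := by
  intro n
  cases n with
  | zero => rw [prependL_one_zero, prependL_one_succ]; exact he
  | succ k => rw [prependL_one_succ, prependL_one_succ]; exact h k

variable (p : ℕ → E)

/-- Shift of a basis element of `V_{[p]}`. -/
def shiftB (n : ℕ) (z : {q : ℕ → E // U.IsIPath q ∧ IPEquiv p q}) :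
    {q : ℕ → E // U.IsIPath q ∧ IPEquiv p q} :=
  ⟨shiftL n z.1, isIPath_shiftL U z.2.1 n,
    ipe_trans z.2.2 ⟨n, 0, by rw [shiftL_zero']⟩⟩

/-- Prepending an edge to a basis element of `V_{[p]}`. -/
def prepB (e : E) (z : {q : ℕ → E // U.IsIPath q ∧ IPEquiv p q})
    (h : U.s (z.1 0) ∈ U.r e) : {q : ℕ → E // U.IsIPath q ∧ IPEquiv p q} :=
  ⟨prependL [e] z.1, isIPath_prepend U e z.2.1 h,
    ipe_trans z.2.2 ⟨0, 1, by
      rw [shiftL_zero']; funext n; exact (prependL_one_succ e z.1 n).symm⟩⟩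

lemma shiftB_zero (z : {q : ℕ → E // U.IsIPath q ∧ IPEquiv p q}) :
    shiftB U p 0 z = z := Subtype.ext (shiftL_zero' z.1)

lemma shiftB_shiftB (a b : ℕ) (z : {q : ℕ → E // U.IsIPath q ∧ IPEquiv p q}) :
    shiftB U p a (shiftB U p b z) = shiftB U p (a + b) z :=
  Subtype.ext (shiftL_shiftL' a b z.1)

lemma shiftB_coe (n : ℕ) (z : {q : ℕ → E // U.IsIPath q ∧ IPEquiv p q}) :
    (shiftB U p n z).1 = shiftL n z.1 := rfl

lemma prepB_shiftB (z : {q : ℕ → E // U.IsIPath q ∧ IPEquiv p q}) (e : E)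
    (he : U.s ((shiftB U p 1 z).1 0) ∈ U.r e) (h0 : z.1 0 = e) :
    prepB U p e (shiftB U p 1 z) he = z := by
  apply Subtype.ext
  funext n
  cases n with
  | zero =>
    show prependL [e] (shiftL 1 z.1) 0 = z.1 0
    rw [prependL_one_zero]
    exact h0.symm
  | succ k =>
    show prependL [e] (shiftL 1 z.1) (k + 1) = z.1 (k + 1)
    rw [prependL_one_succ]
    rfl

end PathAux

section ModAux

open Ultragraph

variable {V E : Type} (K : Type) [Field K] (U : Ultragraph V E) (p : ℕ → E)
variable [instp : Module (LPA K U) (ModVp K U p)]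

lemma smul_comm_K (hVp : VpHyps K U p) (a : LPA K U) (k : K) (m : ModVp K U p) :
    a • (k • m) = k • (a • m) := by
  have h1 : (k • (1 : LPA K U)) • m = k • m := by rw [hVp.1, one_smul]
  calc a • (k • m) = a • ((k • (1 : LPA K U)) • m) := by rw [h1]
    _ = (a * (k • (1 : LPA K U))) • m := (mul_smul _ _ _).symm
    _ = (k • (a * 1)) • m := by rw [mul_smul_comm]
    _ = (k • a) • m := by rw [mul_one]
    _ = k • (a • m) := hVp.1 k a m

lemma Ksmul_eq (hVp : VpHyps K U p) (k : K) (m : ModVp K U p) :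
    (k • (1 : LPA K U)) • m = k • m := by rw [hVp.1, one_smul]

lemma single_smul_eq (z : {q : ℕ → E // U.IsIPath q ∧ IPEquiv p q}) (k : K) :
    (Finsupp.single z k : ModVp K U p) = k • Finsupp.single z 1 := by
  rw [Finsupp.smul_single, smul_eq_mul, mul_one]

lemma p_smul_single (hVp : VpHyps K U p) (A : Set V) (hA : U.IsG0 A)
    (z : {q : ℕ → E // U.IsIPath q ∧ IPEquiv p q}) (k : K) :
    pGen K U A hA • (Finsupp.single z k : ModVp K U p) =
      if U.s (z.1 0) ∈ A then Finsupp.single z k else 0 := by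
  by_cases h : U.s (z.1 0) ∈ A
  · rw [if_pos h, single_smul_eq, smul_comm_K K U p hVp, (hVp.2.1 A hA z).1 h]
  · rw [if_neg h, single_smul_eq, smul_comm_K K U p hVp, (hVp.2.1 A hA z).2 h, smul_zero]

lemma s_smul_single (hVp : VpHyps K U p) (e : E)
    (z : {q : ℕ → E // U.IsIPath q ∧ IPEquiv p q}) (k : K) :
    sGen K U e • (Finsupp.single z k : ModVp K U p) =
      if h : U.s (z.1 0) ∈ U.r e then Finsupp.single (prepB U p e z h) k else 0 := by
  by_cases h : U.s (z.1 0) ∈ U.r e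
  · rw [dif_pos h, single_smul_eq, smul_comm_K K U p hVp,
      (hVp.2.2.1 e z).1 h (prepB U p e z h) rfl, ← single_smul_eq]
  · rw [dif_neg h, single_smul_eq, smul_comm_K K U p hVp, (hVp.2.2.1 e z).2 h, smul_zero]

lemma st_smul_single (hVp : VpHyps K U p) (e : E)
    (z : {q : ℕ → E // U.IsIPath q ∧ IPEquiv p q}) (k : K) :
    stGen K U e • (Finsupp.single z k : ModVp K U p) =
      if z.1 0 = e then Finsupp.single (shiftB U p 1 z) k else 0 := by
  by_cases h : z.1 0 = e
  · rw [if_pos h, single_smul_eq, smul_comm_K K U p hVp,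
      (hVp.2.2.2 e z).1 h (shiftB U p 1 z) rfl, ← single_smul_eq]
  · rw [if_neg h, single_smul_eq, smul_comm_K K U p hVp, (hVp.2.2.2 e z).2 h, smul_zero]

/-- Strip the first `N` edges (as prescribed by the reference path `r`). -/
def stripF : (ℕ → E) → ℕ → ModVp K U p → ModVp K U p
  | _, 0, m => m
  | r, N + 1, m => stripF (shiftL 1 r) N (stGen K U (r 0) • m)

/-- Re-attach the first `N` edges of the reference path `r`. -/
def buildF : (ℕ → E) → ℕ → ModVp K U p → ModVp K U p
  | _, 0, m => m
  | r, N + 1, m => sGen K U (r 0) • buildF (shiftL 1 r) N m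

lemma stripF_zero (r : ℕ → E) (m : ModVp K U p) : stripF K U p r 0 m = m := rfl

lemma stripF_succ (r : ℕ → E) (N : ℕ) (m : ModVp K U p) :
    stripF K U p r (N + 1) m = stripF K U p (shiftL 1 r) N (stGen K U (r 0) • m) := rfl

lemma buildF_zero (r : ℕ → E) (m : ModVp K U p) : buildF K U p r 0 m = m := rfl

lemma buildF_succ (r : ℕ → E) (N : ℕ) (m : ModVp K U p) :
    buildF K U p r (N + 1) m = sGen K U (r 0) • buildF K U p (shiftL 1 r) N m := rfl

lemma stripF_zero_val (N : ℕ) : ∀ (r : ℕ → E), stripF K U p r N 0 = 0 := by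
  induction N with
  | zero => intro r; rfl
  | succ N ih => intro r; rw [stripF_succ, smul_zero]; exact ih _

lemma buildF_zero_val (N : ℕ) : ∀ (r : ℕ → E), buildF K U p r N 0 = 0 := by
  induction N with
  | zero => intro r; rfl
  | succ N ih => intro r; rw [buildF_succ, ih, smul_zero]

lemma stripF_add (N : ℕ) : ∀ (r : ℕ → E) (m m' : ModVp K U p),
    stripF K U p r N (m + m') = stripF K U p r N m + stripF K U p r N m' := by
  induction N with
  | zero => intro r m m'; rfl
  | succ N ih => intro r m m'; rw [stripF_succ, smul_add, ih, stripF_succ, stripF_succ]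

lemma buildF_add (N : ℕ) : ∀ (r : ℕ → E) (m m' : ModVp K U p),
    buildF K U p r N (m + m') = buildF K U p r N m + buildF K U p r N m' := by
  induction N with
  | zero => intro r m m'; rfl
  | succ N ih => intro r m m'; rw [buildF_succ, ih, smul_add, buildF_succ, buildF_succ]

lemma stripF_mem (N : ℕ) (W : Submodule (LPA K U) (ModVp K U p)) :
    ∀ (r : ℕ → E) (m : ModVp K U p), m ∈ W → stripF K U p r N m ∈ W := by
  induction N with
  | zero => intro r m hm; exact hm
  | succ N ih => intro r m hm; exact ih _ _ (Submodule.smul_mem W _ hm)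

lemma buildF_mem (N : ℕ) (W : Submodule (LPA K U) (ModVp K U p)) :
    ∀ (r : ℕ → E) (m : ModVp K U p), m ∈ W → buildF K U p r N m ∈ W := by
  induction N with
  | zero => intro r m hm; exact hm
  | succ N ih => intro r m hm; exact Submodule.smul_mem W _ (ih _ _ hm)

lemma strip_single (hVp : VpHyps K U p) (N : ℕ) :
    ∀ (r : ℕ → E) (z : {q : ℕ → E // U.IsIPath q ∧ IPEquiv p q}) (k : K),
    stripF K U p r N (Finsupp.single z k) =
      if ∀ i, i < N → z.1 i = r i then Finsupp.single (shiftB U p N z) k else 0 := by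
  induction N with
  | zero =>
    intro r z k
    rw [stripF_zero, if_pos (fun i hi => absurd hi (Nat.not_lt_zero i)), shiftB_zero]
  | succ N ih =>
    intro r z k
    rw [stripF_succ, st_smul_single K U p hVp]
    by_cases h : z.1 0 = r 0
    · rw [if_pos h, ih (shiftL 1 r) (shiftB U p 1 z) k]
      by_cases H : ∀ i, i < N + 1 → z.1 i = r i
      · have hcond : ∀ i, i < N → (shiftB U p 1 z).1 i = shiftL 1 r i :=
          fun i hi => H (i + 1) (by omega)
        rw [if_pos hcond, if_pos H, shiftB_shiftB]
      · have hcond : ¬ ∀ i, i < N → (shiftB U p 1 z).1 i = shiftL 1 r i := by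
          intro hc
          exact H (fun i hi => by
            cases i with
            | zero => exact h
            | succ j => exact hc j (by omega))
        rw [if_neg hcond, if_neg H]
    · rw [if_neg h, stripF_zero_val, if_neg (fun H => h (H 0 (by omega)))]

lemma build_shift (hVp : VpHyps K U p) (N : ℕ) :
    ∀ (r : ℕ → E) (z : {q : ℕ → E // U.IsIPath q ∧ IPEquiv p q}) (k : K),
    (∀ i, i < N → z.1 i = r i) →
    buildF K U p r N (Finsupp.single (shiftB U p N z) k) = Finsupp.single z k := by
  induction N with
  | zero => intro r z k _; rw [buildF_zero, shiftB_zero]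
  | succ N ih =>
    intro r z k h
    rw [buildF_succ, ← shiftB_shiftB U p N 1 z]
    rw [ih (shiftL 1 r) (shiftB U p 1 z) k (fun i hi => h (i + 1) (by omega))]
    rw [s_smul_single K U p hVp]
    have hr0 : r 0 = z.1 0 := (h 0 (by omega)).symm
    have hmem : U.s ((shiftB U p 1 z).1 0) ∈ U.r (r 0) := by
      rw [hr0]; exact z.2.1 0
    rw [dif_pos hmem, prepB_shiftB U p z (r 0) hmem (h 0 (by omega))]

lemma comp_apply (hVp : VpHyps K U p) (r : ℕ → E) (N : ℕ) (m : ModVp K U p)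
    (w : {q : ℕ → E // U.IsIPath q ∧ IPEquiv p q}) :
    (buildF K U p r N (stripF K U p r N m)) w =
      if ∀ i, i < N → w.1 i = r i then m w else 0 := by
  induction m using Finsupp.induction_linear with
  | zero => rw [stripF_zero_val, buildF_zero_val]; simp
  | add f g hf hg =>
    rw [stripF_add, buildF_add, Finsupp.add_apply, hf, hg, Finsupp.add_apply]
    by_cases H : ∀ i, i < N → w.1 i = r i
    · rw [if_pos H, if_pos H, if_pos H]
    · rw [if_neg H, if_neg H, if_neg H, add_zero]
  | single z k =>
    rw [strip_single K U p hVp]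
    by_cases P : ∀ i, i < N → z.1 i = r i
    · rw [if_pos P, build_shift K U p hVp N r z k P]
      by_cases Q : ∀ i, i < N → w.1 i = r i
      · rw [if_pos Q]
      · rw [if_neg Q, Finsupp.single_eq_of_ne' (fun hzw : z = w => Q (hzw ▸ P))]
    · rw [if_neg P, buildF_zero_val]
      by_cases Q : ∀ i, i < N → w.1 i = r i
      · rw [if_pos Q, Finsupp.single_eq_of_ne' (fun hzw : z = w => P (hzw ▸ Q)),
          Finsupp.zero_apply]
      · rw [if_neg Q, Finsupp.zero_apply]

lemma support_of_invariant (hVp : VpHyps K U p) (r : ℕ → E) (m : ModVp K U p)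
    (hm : ∀ N, buildF K U p r N (stripF K U p r N m) = m)
    (w : {q : ℕ → E // U.IsIPath q ∧ IPEquiv p q}) (hw : m w ≠ 0) : w.1 = r := by
  by_contra hne
  have : ∃ n, w.1 n ≠ r n := by
    by_contra h2
    push_neg at h2
    exact hne (funext h2)
  obtain ⟨n, hn⟩ := this
  have h3 := comp_apply K U p hVp r (n + 1) m w
  rw [hm (n + 1), if_neg (fun H => hn (H n (by omega)))] at h3
  exact hw h3

end ModAux

section MapAux

open Ultragraph

variable {V E : Type} (K : Type) [Field K] (U : Ultragraph V E) (p q : ℕ → E)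
variable [instp : Module (LPA K U) (ModVp K U p)]
variable [instq : Module (LPA K U) (ModVp K U q)]

lemma stripF_map (f : ModVp K U p →ₗ[LPA K U] ModVp K U q) (N : ℕ) :
    ∀ (r : ℕ → E) (m : ModVp K U p),
    f (stripF K U p r N m) = stripF K U q r N (f m) := by
  induction N with
  | zero => intro r m; rfl
  | succ N ih => intro r m; rw [stripF_succ, ih, f.map_smul, stripF_succ]

lemma buildF_map (f : ModVp K U p →ₗ[LPA K U] ModVp K U q) (N : ℕ) :
    ∀ (r : ℕ → E) (m : ModVp K U p),
    f (buildF K U p r N m) = buildF K U q r N (f m) := by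
  induction N with
  | zero => intro r m; rfl
  | succ N ih => intro r m; rw [buildF_succ, f.map_smul, ih, buildF_succ]

lemma comp_single_self (hVp : VpHyps K U p) (N : ℕ)
    (z : {h : ℕ → E // U.IsIPath h ∧ IPEquiv p h}) :
    buildF K U p z.1 N (stripF K U p z.1 N (Finsupp.single z (1 : K))) =
      Finsupp.single z (1 : K) := by
  have h1 := strip_single K U p hVp N z.1 z 1
  rw [if_pos (fun i _ => rfl)] at h1
  rw [h1, build_shift K U p hVp N z.1 z 1 (fun i _ => rfl)]

lemma apply_single_support (hVp : VpHyps K U p) (hVq : VpHyps K U q)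
    (f : ModVp K U p →ₗ[LPA K U] ModVp K U q)
    (z : {h : ℕ → E // U.IsIPath h ∧ IPEquiv p h})
    (w : {h : ℕ → E // U.IsIPath h ∧ IPEquiv q h})
    (hw : f (Finsupp.single z (1 : K)) w ≠ 0) : w.1 = z.1 := by
  apply support_of_invariant K U q hVq z.1 _ _ w hw
  intro N
  rw [← stripF_map K U p q f N, ← buildF_map K U p q f N, comp_single_self K U p hVp N z]

lemma apply_single_eq (hVp : VpHyps K U p) (f : ModVp K U p →ₗ[LPA K U] ModVp K U p)
    (z : {h : ℕ → E // U.IsIPath h ∧ IPEquiv p h}) :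
    f (Finsupp.single z (1 : K)) =
      Finsupp.single z (f (Finsupp.single z (1 : K)) z) := by
  ext w
  by_cases hw : w = z
  · subst hw; rw [Finsupp.single_eq_same]
  · have h0 : f (Finsupp.single z (1 : K)) w = 0 := by
      by_contra hcon
      exact hw (Subtype.ext (apply_single_support K U p p hVp hVp f z w hcon))
    rw [h0, Finsupp.single_eq_of_ne' (fun h2 => hw h2.symm)]

end MapAux


open Ultragraph in
/-- For irrational infinite paths `p, q`, the module `V_{[p]}` (with
basis `[p]` and the prescribed action) is simple, `V_{[p]} ≅ V_{[q]}` iff `[p] = [q]`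
(equivalently the two bases coincide), and `End(V_{[p]}) ≅ K`. -/
theorem ultragraph_leavitt_Vp_simple
    (K : Type) [Field K] (V E : Type) [Countable V] [Countable E]
    (U : Ultragraph V E) (hns : U.HasNoSinks)
    (p q : ℕ → E) (hp : U.IsIPath p) (hq : U.IsIPath q)
    (hpirr : ¬ U.IsRationalP p) (hqirr : ¬ U.IsRationalP q)
    [instp : Module (LPA K U) (ModVp K U p)]
    [instq : Module (LPA K U) (ModVp K U q)]
    (hVp : VpHyps K U p) (hVq : VpHyps K U q) :
    IsSimpleModule (LPA K U) (ModVp K U p) ∧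
    (Nonempty (ModVp K U p ≃ₗ[LPA K U] ModVp K U q) ↔ IPEquiv p q) ∧
    (IPEquiv p q ↔
      {h : ℕ → E | U.IsIPath h ∧ IPEquiv p h} =
        {h : ℕ → E | U.IsIPath h ∧ IPEquiv q h}) ∧
    (∀ f : ModVp K U p →ₗ[LPA K U] ModVp K U p,
      ∃! k : K, ∀ m : ModVp K U p, f m = k • m) := by
  classical
  let z0 : {h : ℕ → E // U.IsIPath h ∧ IPEquiv p h} := ⟨p, hp, ipe_refl p⟩
  have hnt : (Finsupp.single z0 (1 : K) : ModVp K U p) ≠ 0 :=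
    fun h => one_ne_zero (Finsupp.single_eq_zero.mp h)
  -- Part 1: simplicity
  have hsimple : IsSimpleModule (LPA K U) (ModVp K U p) := by
    haveI : Nontrivial (Submodule (LPA K U) (ModVp K U p)) := by
      apply nontrivial_of_ne ⊥ ⊤
      intro hbt
      exact hnt (by
        have : (Finsupp.single z0 (1 : K) : ModVp K U p) ∈ (⊥ : Submodule (LPA K U) _) := by
          rw [hbt]; trivial
        exact this)
    refine { eq_bot_or_eq_top := fun W => ?_ }
    by_cases hW : W = ⊥
    · exact Or.inl hW
    right
    obtain ⟨m, hmW, hm0⟩ := (Submodule.ne_bot_iff W).mp hW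
    have keyA : ∀ (n : ℕ) (m : ModVp K U p), m ∈ W → m ≠ 0 → m.support.card ≤ n →
        ∃ z, Finsupp.single z (1 : K) ∈ W := by
      intro n
      induction n with
      | zero =>
        intro m hmW hm0 hc
        exact absurd (Finsupp.support_eq_empty.mp (Finset.card_eq_zero.mp
          (Nat.le_antisymm hc (Nat.zero_le _)))) hm0
      | succ n IH =>
        intro m hmW hm0 hc
        obtain ⟨w, hw⟩ := Finsupp.support_nonempty_iff.mpr hm0
        by_cases hone : ∀ w' ∈ m.support, w' = w
        · refine ⟨w, ?_⟩
          have hmw : m w ≠ 0 := Finsupp.mem_support_iff.mp hw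
          have hms : m = Finsupp.single w (m w) := by
            ext w'
            by_cases h' : w' = w
            · subst h'; rw [Finsupp.single_eq_same]
            · rw [Finsupp.notMem_support_iff.mp (fun hc' => h' (hone w' hc')),
                Finsupp.single_eq_of_ne' (fun h2 => h' h2.symm)]
          have hkey : Finsupp.single w (1 : K) = ((m w)⁻¹ • (1 : LPA K U)) • m := by
            rw [Ksmul_eq K U p hVp, hms, Finsupp.smul_single, smul_eq_mul,
              Finsupp.single_eq_same, inv_mul_cancel₀ hmw]
          rw [hkey]
          exact Submodule.smul_mem W _ hmW
        · push_neg at hone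
          obtain ⟨w', hw's, hww⟩ := hone
          have hex : ∃ n0, w'.1 n0 ≠ w.1 n0 := by
            by_contra h2
            push_neg at h2
            exact hww (Subtype.ext (funext h2))
          obtain ⟨n0, hn0⟩ := hex
          set m' := buildF K U p w.1 (n0 + 1) (stripF K U p w.1 (n0 + 1) m) with hm'
          have hvals : ∀ w'', m' w'' =
              if ∀ i, i < n0 + 1 → w''.1 i = w.1 i then m w'' else 0 :=
            fun w'' => comp_apply K U p hVp w.1 (n0 + 1) m w''
          have hmem' : m' ∈ W :=
            buildF_mem K U p _ W _ _ (stripF_mem K U p _ W _ _ hmW)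
          have hm'w : m' w = m w := by rw [hvals w, if_pos (fun i _ => rfl)]
          have hm'0 : m' ≠ 0 := by
            intro h0
            apply Finsupp.mem_support_iff.mp hw
            rw [← hm'w, h0, Finsupp.zero_apply]
          have hsub : m'.support ⊆ m.support := by
            intro x hx
            rw [Finsupp.mem_support_iff] at hx ⊢
            intro hmx
            apply hx
            rw [hvals x]
            by_cases hcx : ∀ i, i < n0 + 1 → x.1 i = w.1 i
            · rw [if_pos hcx, hmx]
            · rw [if_neg hcx]
          have hw'not : w' ∉ m'.support := by
            rw [Finsupp.mem_support_iff, not_not, hvals w',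
              if_neg (fun H => hn0 (H n0 (by omega)))]
          have hcard : m'.support.card ≤ n := by
            have hlt : m'.support ⊂ m.support := ⟨hsub, fun hsup => hw'not (hsup hw's)⟩
            have := Finset.card_lt_card hlt
            omega
          exact IH m' hmem' hm'0 hcard
    obtain ⟨z, hz⟩ := keyA m.support.card m hmW hm0 le_rfl
    have keyB : ∀ w : {h : ℕ → E // U.IsIPath h ∧ IPEquiv p h},
        Finsupp.single w (1 : K) ∈ W := by
      intro w
      obtain ⟨a, b, hab⟩ := ipe_trans (ipe_symm z.2.2) w.2.2
      have h1 : Finsupp.single (shiftB U p a z) (1 : K) ∈ W := by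
        have hs := strip_single K U p hVp a z.1 z 1
        rw [if_pos (fun i _ => rfl)] at hs
        rw [← hs]
        exact stripF_mem K U p _ W _ _ hz
      have h2 : shiftB U p a z = shiftB U p b w := Subtype.ext hab
      rw [h2] at h1
      have h3 := build_shift K U p hVp b w.1 w 1 (fun i _ => rfl)
      rw [← h3]
      exact buildF_mem K U p _ W _ _ h1
    rw [eq_top_iff]
    intro m2 hm2
    clear hm2
    induction m2 using Finsupp.induction_linear with
    | zero => exact W.zero_mem
    | add f1 f2 h1 h2 => exact W.add_mem h1 h2
    | single z' k =>
      have hk : (Finsupp.single z' k : ModVp K U p) =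
          (k • (1 : LPA K U)) • Finsupp.single z' 1 := by
        rw [Ksmul_eq K U p hVp, ← single_smul_eq]
      rw [hk]
      exact Submodule.smul_mem W _ (keyB z')
  -- Part 3
  have part3 : IPEquiv p q ↔
      ({h : ℕ → E | U.IsIPath h ∧ IPEquiv p h} =
        {h : ℕ → E | U.IsIPath h ∧ IPEquiv q h}) := by
    constructor
    · intro h
      ext x
      exact ⟨fun hx => ⟨hx.1, ipe_trans (ipe_symm h) hx.2⟩,
        fun hx => ⟨hx.1, ipe_trans h hx.2⟩⟩
    · intro hset
      have hqmem : q ∈ {h : ℕ → E | U.IsIPath h ∧ IPEquiv q h} := ⟨hq, ipe_refl q⟩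
      rw [← hset] at hqmem
      exact hqmem.2
  -- Part 2
  have part2 : Nonempty (ModVp K U p ≃ₗ[LPA K U] ModVp K U q) ↔ IPEquiv p q := by
    constructor
    · rintro ⟨φ⟩
      have hne : φ (Finsupp.single z0 (1 : K)) ≠ 0 := by
        intro h0
        exact hnt (φ.injective (by rw [h0, map_zero]))
      obtain ⟨w, hw⟩ := Finsupp.support_nonempty_iff.mpr hne
      have hwp : w.1 = p :=
        apply_single_support K U p q hVp hVq φ.toLinearMap z0 w
          (Finsupp.mem_support_iff.mp hw)
      have hqe := w.2.2
      rw [hwp] at hqe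
      exact ipe_symm hqe
    · intro hpq
      let eB : {h : ℕ → E // U.IsIPath h ∧ IPEquiv p h} ≃
          {h : ℕ → E // U.IsIPath h ∧ IPEquiv q h} :=
        { toFun := fun z => ⟨z.1, z.2.1, ipe_trans (ipe_symm hpq) z.2.2⟩
          invFun := fun z => ⟨z.1, z.2.1, ipe_trans hpq z.2.2⟩
          left_inv := fun z => Subtype.ext rfl
          right_inv := fun z => Subtype.ext rfl }
      let g : ModVp K U p ≃ₗ[K] ModVp K U q := Finsupp.domLCongr eB
      have hg_single : ∀ z k, g (Finsupp.single z k) = Finsupp.single (eB z) k :=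
        fun z k => Finsupp.domLCongr_single eB z k
      have algKp : ∀ (r : K) (m : ModVp K U p),
          (algebraMap K (LPA K U) r) • m = r • m := by
        intro r m
        rw [Algebra.algebraMap_eq_smul_one]
        exact Ksmul_eq K U p hVp r m
      have algKq : ∀ (r : K) (m : ModVp K U q),
          (algebraMap K (LPA K U) r) • m = r • m := by
        intro r m
        rw [Algebra.algebraMap_eq_smul_one]
        exact Ksmul_eq K U q hVq r m
      have hred : ∀ (a : LPA K U),
          (∀ z k, g (a • Finsupp.single z k) = a • g (Finsupp.single z k)) →
          ∀ m, g (a • m) = a • g m := by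
        intro a ha m
        induction m using Finsupp.induction_linear with
        | zero => rw [smul_zero, map_zero, smul_zero]
        | add f1 f2 h1 h2 => rw [smul_add, map_add, h1, h2, map_add, smul_add]
        | single z k => exact ha z k
      have hcomm : ∀ (a : LPA K U) (m : ModVp K U p), g (a • m) = a • g m := by
        intro a
        obtain ⟨x, rfl⟩ := RingQuot.mkAlgHom_surjective K (LRel K U) a
        induction x using FreeAlgebra.induction with
        | grade0 r =>
          intro m
          rw [AlgHom.commutes, algKp, algKq, map_smul]
        | grade1 x =>
          cases x with
          | pr A =>
            obtain ⟨A, hA⟩ := A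
            apply hred
            intro z k
            have hid : RingQuot.mkAlgHom K (LRel K U)
                (FreeAlgebra.ι K (LGen.pr ⟨A, hA⟩)) = pGen K U A hA := rfl
            rw [hid, hg_single, p_smul_single K U p hVp A hA z k,
              p_smul_single K U q hVq A hA (eB z) k]
            by_cases h : U.s (z.1 0) ∈ A
            · have h' : U.s ((eB z).1 0) ∈ A := h
              rw [if_pos h, if_pos h', hg_single]
            · have h' : U.s ((eB z).1 0) ∉ A := h
              rw [if_neg h, if_neg h', map_zero]
          | ed e =>
            apply hred
            intro z k
            have hid : RingQuot.mkAlgHom K (LRel K U)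
                (FreeAlgebra.ι K (LGen.ed e)) = sGen K U e := rfl
            rw [hid, hg_single, s_smul_single K U p hVp e z k,
              s_smul_single K U q hVq e (eB z) k]
            by_cases h : U.s (z.1 0) ∈ U.r e
            · have h' : U.s ((eB z).1 0) ∈ U.r e := h
              rw [dif_pos h, dif_pos h', hg_single,
                show eB (prepB U p e z h) = prepB U q e (eB z) h' from Subtype.ext rfl]
            · have h' : U.s ((eB z).1 0) ∉ U.r e := h
              rw [dif_neg h, dif_neg h', map_zero]
          | st e =>
            apply hred
            intro z k
            have hid : RingQuot.mkAlgHom K (LRel K U)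
                (FreeAlgebra.ι K (LGen.st e)) = stGen K U e := rfl
            rw [hid, hg_single, st_smul_single K U p hVp e z k,
              st_smul_single K U q hVq e (eB z) k]
            by_cases h : z.1 0 = e
            · have h' : (eB z).1 0 = e := h
              rw [if_pos h, if_pos h', hg_single,
                show eB (shiftB U p 1 z) = shiftB U q 1 (eB z) from Subtype.ext rfl]
            · have h' : (eB z).1 0 ≠ e := h
              rw [if_neg h, if_neg h', map_zero]
        | mul a b ha hb =>
          intro m
          rw [map_mul, mul_smul, ha, hb, mul_smul]
        | add a b ha hb =>
          intro m
          rw [map_add, add_smul, map_add, ha, hb, add_smul]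
      exact ⟨{ toFun := g, map_add' := fun x y => map_add g x y,
               map_smul' := fun a m => hcomm a m,
               invFun := g.symm, left_inv := g.symm_apply_apply,
               right_inv := g.apply_symm_apply }⟩
  -- Part 4
  have part4 : ∀ f : ModVp K U p →ₗ[LPA K U] ModVp K U p,
      ∃! k : K, ∀ m : ModVp K U p, f m = k • m := by
    intro f
    set c : {h : ℕ → E // U.IsIPath h ∧ IPEquiv p h} → K :=
      fun z => f (Finsupp.single z 1) z with hc
    have hfe : ∀ z, f (Finsupp.single z (1 : K)) = Finsupp.single z (c z) :=
      fun z => apply_single_eq K U p hVp f z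
    have hshift : ∀ z, c (shiftB U p 1 z) = c z := by
      intro z
      have h1 : Finsupp.single (shiftB U p 1 z) (1 : K) =
          stGen K U (z.1 0) • Finsupp.single z (1 : K) := by
        rw [st_smul_single K U p hVp, if_pos rfl]
      have h2 : f (Finsupp.single (shiftB U p 1 z) (1 : K)) =
          Finsupp.single (shiftB U p 1 z) (c z) := by
        rw [h1, f.map_smul, hfe z, st_smul_single K U p hVp, if_pos rfl]
      have h3 := h2.symm.trans (hfe (shiftB U p 1 z))
      have h4 := congrArg (fun (m : ModVp K U p) => m (shiftB U p 1 z)) h3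
      simpa [Finsupp.single_eq_same] using h4.symm
    have hshiftN : ∀ (n : ℕ) z, c (shiftB U p n z) = c z := by
      intro n
      induction n with
      | zero => intro z; rw [shiftB_zero]
      | succ n ih =>
        intro z
        have e1 : shiftB U p (n + 1) z = shiftB U p 1 (shiftB U p n z) :=
          ((shiftB_shiftB U p 1 n z).trans (by rw [Nat.add_comm])).symm
        rw [e1, hshift, ih]
    have hconst : ∀ z, c z = c z0 := by
      intro z
      obtain ⟨a, b, hab⟩ := z.2.2
      have h4 : shiftB U p b z = shiftB U p a z0 := Subtype.ext hab.symm
      calc c z = c (shiftB U p b z) := (hshiftN b z).symm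
        _ = c (shiftB U p a z0) := by rw [h4]
        _ = c z0 := hshiftN a z0
    refine ⟨c z0, ?_, ?_⟩
    · intro m
      induction m using Finsupp.induction_linear with
      | zero => rw [map_zero, smul_zero]
      | add f1 f2 h1 h2 => rw [map_add, h1, h2, smul_add]
      | single z k =>
        have hk : (Finsupp.single z k : ModVp K U p) =
            (k • (1 : LPA K U)) • Finsupp.single z 1 := by
          rw [Ksmul_eq K U p hVp, ← single_smul_eq]
        have hL : f (Finsupp.single z k) = Finsupp.single z (k * c z) := by
          rw [hk, f.map_smul, hfe z, Ksmul_eq K U p hVp, Finsupp.smul_single, smul_eq_mul]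
        rw [hL, hconst z, Finsupp.smul_single, smul_eq_mul, mul_comm]
    · intro k' hk'
      have h5 := hk' (Finsupp.single z0 1)
      have h6 : Finsupp.single z0 (c z0) = k' • Finsupp.single z0 (1 : K) := by
        rw [← hfe z0, h5]
      have h7 := congrArg (fun (m : ModVp K U p) => m z0) h6
      simpa [Finsupp.single_eq_same] using h7.symm
  exact ⟨hsimple, part2, part3, part4⟩
end
end

section
/- Let 𝒢 be an ultragraph without sinks. Then the ℤ-graded ultragraph groupoid 𝔊_𝒢 is unperforated: for every integer n > 0 and every g ∈ (𝔊_𝒢)_n, there exist g₁, …, gₙ ∈ (𝔊_𝒢)_1 such that g = g₁ g₂ ⋯ gₙ. -/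
set_option synthInstance.maxHeartbeats 1000000
set_option maxHeartbeats 1000000

noncomputable section
open Classical TensorProduct

section UnperforatedAux

open Ultragraph

theorem getLast?_drop_aux {α : Type} (l : List α) (k : ℕ) (hk : k < l.length) :
    (l.drop k).getLast? = l.getLast? := by
  conv_rhs => rw [← List.take_append_drop k l]
  rw [List.getLast?_append_of_ne_nil]
  intro h
  have : (l.drop k).length = 0 := by rw [h]; rfl
  simp at this; omega

theorem prependL_drop_aux {E : Type} (l : List E) (p : ℕ → E) (k : ℕ) (hk : k ≤ l.length) :
    prependL (l.drop k) p = shiftL k (prependL l p) := by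
  funext n
  simp only [prependL, shiftL, List.length_drop]
  by_cases h1 : n < l.length - k
  · rw [dif_pos h1, dif_pos (by omega)]
    simp only [List.get_eq_getElem]
    rw [List.getElem_drop]
    congr 1; omega
  · rw [dif_neg h1, dif_neg (by omega)]
    congr 1; omega

theorem shiftL_isIPath_aux {V E : Type} (U : Ultragraph V E) (k : ℕ) (p : ℕ → E)
    (h : U.IsIPath p) : U.IsIPath (shiftL k p) := by
  intro n
  simpa [shiftL, show n + 1 + k = (n + k) + 1 by omega] using h (n + k)

theorem drop_step_aux {V E : Type} (U : Ultragraph V E) (x : List E × Set V)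
    (μ : XType V E) (hx : U.IsUPath x) (hcx : U.CanConcatX x μ)
    (hXx : U.IsXEl (concatXel x μ)) (k : ℕ) (hk : k < x.1.length) :
    U.IsUPath (x.1.drop k, x.2) ∧ U.CanConcatX (x.1.drop k, x.2) μ ∧
      U.IsXEl (concatXel (x.1.drop k, x.2) μ) := by
  obtain ⟨hx1, hx2, hx3⟩ := hx
  refine ⟨⟨List.IsChain.drop hx1 k, hx2, ?_⟩, ?_, ?_⟩
  · intro e he
    exact hx3 e (by rwa [getLast?_drop_aux _ _ hk] at he)
  · cases μ with
    | inl z => exact hcx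
    | inr p => exact hcx
  · cases μ with
    | inl z =>
      obtain ⟨hU, hUs, hIE⟩ := hXx
      obtain ⟨hU1, hU2, hU3⟩ := hU
      refine ⟨⟨?_, hU2, ?_⟩, hUs, hIE⟩
      · show List.Chain' U.Adj (x.1.drop k ++ z.1)
        rw [← List.drop_append_of_le_length hk.le]
        exact List.IsChain.drop hU1 k
      · intro e he
        have he' : (x.1.drop k ++ z.1).getLast? = some e := he
        by_cases hz : z.1 = []
        · rw [hz, List.append_nil, getLast?_drop_aux _ _ hk] at he'
          refine hU3 e ?_
          show (x.1 ++ z.1).getLast? = some e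
          rw [hz, List.append_nil]; exact he'
        · rw [List.getLast?_append_of_ne_nil _ hz] at he'
          refine hU3 e ?_
          show (x.1 ++ z.1).getLast? = some e
          rw [List.getLast?_append_of_ne_nil _ hz]; exact he'
    | inr p =>
      show U.IsIPath (prependL (x.1.drop k) p)
      rw [prependL_drop_aux _ _ _ hk.le]
      exact shiftL_isIPath_aux U k _ hXx

end UnperforatedAux

open Ultragraph in
/-- The ℤ-graded ultragraph groupoid `𝔊_𝒢` (`𝒢` without sinks) is
unperforated: every `g` of degree `n > 0` is a product of `n` elements of degree `1`. -/
theorem ultragraph_groupoid_unperforated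
    (V E : Type) [Countable V] [Countable E] (U : Ultragraph V E)
    (hns : U.HasNoSinks) :
    ∀ n : ℤ, 0 < n → ∀ g : Trip V E, U.InGrpd g → g.2.1 = n →
      ∃ (a : Trip V E) (l : List (Trip V E)),
        (a :: l).length = n.toNat ∧
        (∀ b ∈ a :: l, U.InGrpd b ∧ b.2.1 = 1) ∧
        List.Chain' (fun b c => b.2.2 = c.1) (a :: l) ∧
        g = l.foldl compT a := by
  intro n hn g hg hgn
  obtain ⟨x, y, μ, hx, hy, hμ, hxy, hcx, hcy, hXx, hXy, heq⟩ := hg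
  set nn := n.toNat with hnn
  have hdeg : (x.1.length : ℤ) - (y.1.length : ℤ) = n := by
    rw [heq] at hgn; simpa using hgn
  have hlen : x.1.length = y.1.length + nn := by omega
  set w : ℕ → List E × Set V := fun i => if i < nn then (x.1.drop i, x.2) else y with hw
  have wprop : ∀ i, U.IsUPath (w i) ∧ U.CanConcatX (w i) μ ∧
      U.IsXEl (concatXel (w i) μ) ∧ (w i).2 = x.2 := by
    intro i
    by_cases h : i < nn
    · have hk : i < x.1.length := by omega
      have hwi : w i = (x.1.drop i, x.2) := by simp only [hw]; rw [if_pos h]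
      rw [hwi]
      obtain ⟨h1, h2, h3⟩ := drop_step_aux U x μ hx hcx hXx i hk
      exact ⟨h1, h2, h3, rfl⟩
    · have hwi : w i = y := by simp only [hw]; rw [if_neg h]
      rw [hwi]
      exact ⟨hy, hcy, hXy, hxy.symm⟩
  have wlen : ∀ i, i ≤ nn → (w i).1.length = x.1.length - i := by
    intro i hi
    by_cases h : i < nn
    · have hwi : w i = (x.1.drop i, x.2) := by simp only [hw]; rw [if_pos h]
      rw [hwi]; simp [List.length_drop]
    · have hwi : w i = y := by simp only [hw]; rw [if_neg h]
      rw [hwi]; omega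
  have hw0 : w 0 = x := by
    simp only [hw]; rw [if_pos (by omega : 0 < nn)]
    simp
  have hwnn : w nn = y := by simp only [hw]; rw [if_neg (lt_irrefl nn)]
  set f : ℕ → Trip V E := fun i => (concatXel (w i) μ, (1 : ℤ), concatXel (w (i+1)) μ) with hf
  have key : ∀ i, i < nn → U.InGrpd (f i) := by
    intro i hi
    have hd : ((w i).1.length : ℤ) - ((w (i+1)).1.length : ℤ) = 1 := by
      rw [wlen i (by omega), wlen (i+1) (by omega)]
      omega
    refine ⟨w i, w (i+1), μ, (wprop i).1, (wprop (i+1)).1, hμ,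
      by rw [(wprop i).2.2.2, (wprop (i+1)).2.2.2], (wprop i).2.1, (wprop (i+1)).2.1,
      (wprop i).2.2.1, (wprop (i+1)).2.2.1, ?_⟩
    rw [hd]
  obtain ⟨k, hkn⟩ : ∃ k, nn = k + 1 := ⟨nn - 1, by omega⟩
  have hlist : (f 0 :: (List.range k).map (fun i => f (i+1))) = (List.range (k+1)).map f := by
    rw [List.range_succ_eq_map, List.map_cons, List.map_map]
    rfl
  refine ⟨f 0, (List.range k).map (fun i => f (i+1)), ?_, ?_, ?_, ?_⟩
  · simp only [List.length_cons, List.length_map, List.length_range]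
    omega
  · intro b hb
    have : ∃ i, i < nn ∧ b = f i := by
      rcases List.mem_cons.mp hb with h | h
      · exact ⟨0, by omega, h⟩
      · obtain ⟨i, hi, hib⟩ := List.mem_map.mp h
        exact ⟨i + 1, by simp at hi; omega, hib.symm⟩
    obtain ⟨i, hi, rfl⟩ := this
    exact ⟨key i hi, rfl⟩
  · rw [hlist]; show List.IsChain _ _; rw [List.isChain_map]
    exact (List.isChain_range_succ _ k).mpr (fun m _ => rfl)
  · have fold : ∀ j, ((List.range j).map (fun i => f (i+1))).foldl compT (f 0) =
        (concatXel (w 0) μ, (j : ℤ) + 1, concatXel (w (j+1)) μ) := by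
      intro j
      induction j with
      | zero => simp [hf]
      | succ j ih =>
        rw [List.range_succ, List.map_append, List.foldl_append, ih]
        simp only [List.map_cons, List.map_nil, List.foldl_cons, List.foldl_nil, compT, hf]
        refine Prod.ext rfl (Prod.ext ?_ rfl)
        push_cast
        ring
    rw [fold k, hw0, show k + 1 = nn from hkn.symm, hwnn, heq]
    refine Prod.ext rfl (Prod.ext ?_ rfl)
    show (x.1.length : ℤ) - (y.1.length : ℤ) = (k : ℤ) + 1
    omega
end
end
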